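/- Let X ∈ ℝ^{m×n} be a matrix of rank r, let I ⊆ {1,…,m} and J ⊆ {1,…,n}, and set C = [X]_{:,J}, R = [X]_{I,:}, and U = [X]_{I,J}. If rank(C) = rank(R) = rank(X) = r, then X = C U† R. -/

import Mathlib

open Matrix

/-- `B` is the Moore–Penrose pseudoinverse of `A`, characterized by the four
Penrose conditions (over `ℝ`, where conjugate transpose is transpose). -/
def IsMPInv {m n : Type*} [Fintype m] [Fintype n] (A : Matrix m n ℝ)
    (B : Matrix n m ℝ) : Prop :=
  A * B * A = A ∧ B * A * B = B ∧ (A * B)ᵀ = A * B ∧ (B * A)ᵀ = B * A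

lemma col_factor {m n J : Type*} [Fintype m] [Fintype n] [Fintype J] [DecidableEq n]
    (A : Matrix m n ℝ) (E : Matrix n J ℝ) (h : (A * E).rank = A.rank) :
    ∃ W : Matrix J n ℝ, A = (A * E) * W := by
  have hle : LinearMap.range (A * E).mulVecLin ≤ LinearMap.range A.mulVecLin := by
    rw [Matrix.mulVecLin_mul]
    exact LinearMap.range_comp_le_range _ _
  have heq : LinearMap.range (A * E).mulVecLin = LinearMap.range A.mulVecLin :=
    Submodule.eq_of_le_of_finrank_eq hle h
  have hcol : ∀ j : n, ∃ w : J → ℝ, (A * E) *ᵥ w = fun i => A i j := by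
    intro j
    have hmem : (fun i => A i j) ∈ LinearMap.range A.mulVecLin := by
      refine ⟨Pi.single j 1, ?_⟩
      ext i
      simp [Matrix.mulVecLin_apply, Matrix.mulVec_single]
    rw [← heq] at hmem
    obtain ⟨w, hw⟩ := hmem
    exact ⟨w, hw⟩
  choose w hw using hcol
  refine ⟨fun k j => w j k, ?_⟩
  ext i j
  have := congrFun (hw j) i
  show A i j = (A * E * Matrix.of (fun k j => w j k)) i j
  rw [Matrix.mul_apply]
  simpa [Matrix.mul_apply, Matrix.mulVec, dotProduct] using this.symm

/-- Let `X ∈ ℝ^{m×n}` have rank `r`, let `I ⊆ [m]`, `J ⊆ [n]`,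
and set `C = X[:,J]`, `R = X[I,:]`, `U = X[I,J]`. If
`rank C = rank R = rank X = r`, then `X = C U† R`. -/
theorem cur_decomposition_of_rank (m n r : ℕ) (X : Matrix (Fin m) (Fin n) ℝ)
    (hrankX : X.rank = r) (I : Finset (Fin m)) (J : Finset (Fin n))
    (C : Matrix (Fin m) ↥J ℝ) (R : Matrix ↥I (Fin n) ℝ) (U : Matrix ↥I ↥J ℝ)
    (hC : C = X.submatrix id (fun j : ↥J => (j : Fin n)))
    (hR : R = X.submatrix (fun i : ↥I => (i : Fin m)) id)
    (hU : U = X.submatrix (fun i : ↥I => (i : Fin m)) (fun j : ↥J => (j : Fin n)))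
    (hrankC : C.rank = r) (hrankR : R.rank = r)
    (Udag : Matrix ↥J ↥I ℝ) (hUdag : IsMPInv U Udag) :
    X = C * Udag * R := by
  classical
  -- selection matrices
  set E : Matrix (Fin n) ↥J ℝ := Matrix.of (fun k j => if (j : Fin n) = k then 1 else 0)
    with hE
  set P : Matrix ↥I (Fin m) ℝ := Matrix.of (fun i k => if (i : Fin m) = k then 1 else 0)
    with hP
  have hCE : C = X * E := by
    ext i j
    simp [hC, hE, Matrix.mul_apply, mul_ite, mul_one, mul_zero]
  have hRP : R = P * X := by
    ext i j
    simp [hR, hP, Matrix.mul_apply, ite_mul, one_mul, zero_mul]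
  have hUPC : U = P * C := by
    ext i j
    simp [hU, hCE, hC, hP, hE, Matrix.mul_apply, ite_mul, one_mul, zero_mul, mul_ite, mul_one, mul_zero]
  have hURE : U = R * E := by
    ext i j
    simp [hU, hRP, hR, hE, hP, Matrix.mul_apply, ite_mul, one_mul, zero_mul, mul_ite, mul_one, mul_zero]
  -- column factorization: X = C * W
  obtain ⟨W, hW⟩ : ∃ W : Matrix ↥J (Fin n) ℝ, X = (X * E) * W := by
    apply col_factor
    rw [← hCE, hrankC, hrankX]
  rw [← hCE] at hW
  -- row factorization: X = Z * R
  obtain ⟨Z', hZ'⟩ : ∃ Z' : Matrix ↥I (Fin m) ℝ, Xᵀ = (Xᵀ * Pᵀ) * Z' := by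
    apply col_factor
    rw [← Matrix.transpose_mul, ← hRP, Matrix.rank_transpose, Matrix.rank_transpose,
      hrankR, hrankX]
  have hZ : X = Z'ᵀ * R := by
    have := congrArg Matrix.transpose hZ'
    simpa [Matrix.transpose_mul, ← hRP, Matrix.mul_assoc] using this
  set Z := Z'ᵀ
  have hCZU : C = Z * U := by
    rw [hURE, hCE, hZ]
    rw [Matrix.mul_assoc]
  have hRUW : R = U * W := by
    rw [hUPC, hRP, hW]
    rw [Matrix.mul_assoc]
  calc X = C * W := hW
    _ = Z * (U * Udag * U) * W := by rw [hUdag.1, ← hCZU]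
    _ = (Z * U) * Udag * (U * W) := by
        simp only [Matrix.mul_assoc]
    _ = C * Udag * R := by rw [← hCZU, ← hRUW]
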